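/- Let R be a Polish ring with unity and let I_R = {x ∈ R : there exists y ∈ R with x·y = 1}. Then I_R is an analytic subset of R; if moreover R is commutative, then I_R is a Borel subset of R. -/

import Mathlib

noncomputable section

open MeasureTheory

lemma stmt19_aux (R : Type) [TopologicalSpace R] [Ring R] [IsTopologicalRing R] [PolishSpace R] :
    {x : R | ∃ y : R, x * y = 1} = Prod.fst '' {p : R × R | p.1 * p.2 = 1} := by
  ext x
  simp [Set.mem_image, eq_comm]

/-- in a Polish ring with unity, the set of right-invertible elements is
analytic, and Borel if the ring is commutative. -/
theorem stmt19 (R : Type) [TopologicalSpace R] [Ring R] [IsTopologicalRing R] [PolishSpace R]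
    [MeasurableSpace R] [BorelSpace R] :
    MeasureTheory.AnalyticSet {x : R | ∃ y : R, x * y = 1} ∧
    ((∀ x y : R, x * y = y * x) → MeasurableSet {x : R | ∃ y : R, x * y = 1}) := by
  have hclosed : IsClosed {p : R × R | p.1 * p.2 = 1} :=
    isClosed_eq (continuous_fst.mul continuous_snd) continuous_const
  rw [stmt19_aux]
  constructor
  · exact (hclosed.analyticSet).image_of_continuous continuous_fst
  · intro hcomm
    refine hclosed.measurableSet.image_of_continuousOn_injOn continuous_fst.continuousOn ?_
    rintro ⟨x, y⟩ hxy ⟨x', y'⟩ hxy' (h : x = x')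
    subst h
    simp only [Set.mem_setOf_eq] at hxy hxy'
    have : y = y' := by
      calc y = y * (x * y') := by rw [hxy', mul_one]
        _ = (x * y) * y' := by rw [← mul_assoc, hcomm y x]
        _ = y' := by rw [hxy, one_mul]
    simp [this]

end
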